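/- Let d ≥ 2 and let A_{d+1} be the (d+1)×(d+1) row-stochastic matrix with 0 on the diagonal and 1/d in every off-diagonal entry. Then the identity matrix I_d and A_{d+1} are ultraweakly incomparable: there exist no row-stochastic matrices L, R with L·I_d·R = A_{d+1}, and no row-stochastic matrices L', R' with L'·A_{d+1}·R' = I_d. -/

import Mathlib

open Matrix BigOperators
open scoped ComplexOrder

/-- A real matrix is row-stochastic if all entries are nonnegative
and each row sums to 1. -/
def RowStochastic {m n : ℕ} (A : Matrix (Fin m) (Fin n) ℝ) : Prop :=
  (∀ i j, 0 ≤ A i j) ∧ ∀ i, ∑ j, A i j = 1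

/-- `A` admits a quantum implementation in dimension `d`: there are states
`ρ i` (PSD, trace one) and POVM effects `M j` (PSD, summing to the identity)
with `A i j = Re (tr (ρ i * M j))`. -/
def QuantumImpl (d m n : ℕ) (A : Matrix (Fin m) (Fin n) ℝ) : Prop :=
  ∃ (ρ : Fin m → Matrix (Fin d) (Fin d) ℂ) (M : Fin n → Matrix (Fin d) (Fin d) ℂ),
    (∀ i, (ρ i).PosSemidef ∧ (ρ i).trace = 1) ∧
    (∀ j, (M j).PosSemidef) ∧ (∑ j, M j = 1) ∧
    (∀ i j, A i j = ((ρ i * M j).trace).re)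

/-- The max monotone `λmax(A) = Σ_j max_i A i j`. -/
noncomputable def lmax {m n : ℕ} (A : Matrix (Fin m) (Fin n) ℝ) : ℝ :=
  ∑ j, ⨆ i, A i j

/-- The min monotone `λmin(A) = −Σ_j min_i A i j`. -/
noncomputable def lmin {m n : ℕ} (A : Matrix (Fin m) (Fin n) ℝ) : ℝ :=
  - ∑ j, ⨅ i, A i j

/-- `UWMaj B A` : `B` is ultraweakly majorized by `A` (i.e. `B ⪯ A`),
meaning `B = L * A * R` for some row-stochastic `L`, `R`. -/
def UWMaj {m' n' m n : ℕ} (B : Matrix (Fin m') (Fin n') ℝ)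
    (A : Matrix (Fin m) (Fin n) ℝ) : Prop :=
  ∃ (L : Matrix (Fin m') (Fin m) ℝ) (R : Matrix (Fin n) (Fin n') ℝ),
    RowStochastic L ∧ RowStochastic R ∧ L * A * R = B

/-- the identity `I_d` and the antidistinguishability matrix
`A_{d+1}` (zero diagonal, `1/d` off-diagonal) are ultraweakly incomparable. -/
theorem id_and_antidist_incomparable (d : ℕ) (hd : 2 ≤ d)
    (A : Matrix (Fin (d + 1)) (Fin (d + 1)) ℝ)
    (hAdef : ∀ i j, A i j = if i = j then 0 else 1 / (d : ℝ)) :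
    ¬ UWMaj A (1 : Matrix (Fin d) (Fin d) ℝ) ∧
    ¬ UWMaj (1 : Matrix (Fin d) (Fin d) ℝ) A := by
  have hd0 : (0:ℝ) < d := by
    have : (2:ℝ) ≤ d := by exact_mod_cast hd
    linarith
  have hAle : ∀ i j, A i j ≤ 1 / d := by
    intro i j
    rw [hAdef]
    split
    · positivity
    · exact le_refl _
  constructor
  · -- rank argument: A is invertible, but A = L * R with inner dim d
    rintro ⟨L, R, hL, hR, hLR⟩
    rw [Matrix.mul_one] at hLR
    set B : Matrix (Fin (d+1)) (Fin (d+1)) ℝ :=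
      Matrix.of (fun j k => 1 - if j = k then (d:ℝ) else 0) with hB
    have hAB : A * B = 1 := by
      ext i k
      simp only [mul_apply, hB, of_apply, one_apply, mul_sub, mul_ite, mul_zero, mul_one]
      rw [Finset.sum_sub_distrib, Finset.sum_ite_eq' Finset.univ k (fun j => A i j * d)]
      have hrow : ∑ j, A i j = 1 := by
        have : ∀ j, A i j = 1/(d:ℝ) - if i = j then 1/(d:ℝ) else 0 := by
          intro j; rw [hAdef]; split <;> simp
        simp only [this]
        rw [Finset.sum_sub_distrib, Finset.sum_ite_eq Finset.univ i (fun _ => (1:ℝ)/(d:ℝ))]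
        simp [Finset.card_univ]
        field_simp
        ring
      rw [hrow]
      simp only [Finset.mem_univ, if_true]
      rcases eq_or_ne i k with h | h
      · simp [h, hAdef]
      · rw [hAdef]
        simp [h]
        field_simp
        ring
    have h1 : L * (R * B) = 1 := by rw [← Matrix.mul_assoc, hLR, hAB]
    have hrank := Matrix.rank_mul_le_left L (R * B)
    rw [h1, Matrix.rank_one] at hrank
    have := (Matrix.rank_le_card_width L).trans_eq (Fintype.card_fin d)
    simp [Fintype.card_fin] at hrank
    omega
  · -- trace argument
    rintro ⟨L, R, hL, hR, hLR⟩
    -- (L*A) i l ≤ 1/d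
    have hLA : ∀ i l, (L * A) i l ≤ 1 / d := by
      intro i l
      calc (L * A) i l = ∑ k, L i k * A k l := by rw [mul_apply]
        _ ≤ ∑ k, L i k * (1/d) := by
            apply Finset.sum_le_sum
            intro k _
            exact mul_le_mul_of_nonneg_left (hAle k l) (hL.1 i k)
        _ = 1/d := by rw [← Finset.sum_mul, hL.2 i, one_mul]
    have hdiag : ∀ j : Fin d, (1:ℝ) ≤ ∑ l, (1/d) * R l j := by
      intro j
      have : (L * A * R) j j = 1 := by rw [hLR]; simp [one_apply]
      calc (1:ℝ) = (L * A * R) j j := this.symm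
        _ = ∑ l, (L * A) j l * R l j := by rw [mul_apply]
        _ ≤ ∑ l, (1/d) * R l j := by
            apply Finset.sum_le_sum
            intro l _
            exact mul_le_mul_of_nonneg_right (hLA j l) (hR.1 l j)
    have htot : (d:ℝ) ≤ (1/d) * (d+1) := by
      calc (d:ℝ) = ∑ _j : Fin d, (1:ℝ) := by simp
        _ ≤ ∑ j : Fin d, ∑ l, (1/d) * R l j := Finset.sum_le_sum (fun j _ => hdiag j)
        _ = (1/d) * ∑ l, ∑ j, R l j := by
            rw [Finset.sum_comm, Finset.mul_sum]
            congr 1; ext l; rw [← Finset.mul_sum]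
        _ = (1/d) * (d+1) := by
            congr 1
            simp only [hR.2]
            simp
    have hd2 : (2:ℝ) ≤ d := by exact_mod_cast hd
    have htot' : (d:ℝ)*d ≤ d+1 := by
      have h := mul_le_mul_of_nonneg_left htot hd0.le
      rw [← mul_assoc, mul_one_div, div_self hd0.ne', one_mul] at h
      exact h
    nlinarith [htot', hd2]
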